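/- Let 0 < α ≤ 1 and let Φ be a positive increasing function on (0,∞) satisfying Φ(2r) ≤ D·Φ(r) for all r > 0 with doubling constant 1 ≤ D < 2ⁿ. There exists a constant C > 0 such that for every f ∈ L^{1,Φ}(ℝⁿ), every ball B(x₀,r), and every x ∈ B(x₀,r), if f vanishes on B(x₀,2r) then S_α(f)(x) ≤ C ‖f‖_{L^{1,Φ}} · Φ(r)/|B(x₀,r)|, where |B(x₀,r)| denotes the Lebesgue measure of the ball B(x₀,r). -/

import Mathlib

open MeasureTheory Metric Set

noncomputable section

/-- `ℝⁿ` as a Euclidean space. -/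
abbrev Rn (n : ℕ) := EuclideanSpace ℝ (Fin n)

/-- The family `𝒞_α` of real functions supported in the closed unit ball, with vanishing
integral, satisfying the Hölder condition `|φ x - φ x'| ≤ |x - x'|^α`. -/
def Calpha (n : ℕ) (α : ℝ) : Set (Rn n → ℝ) :=
  {φ | (∀ x : Rn n, 1 < ‖x‖ → φ x = 0) ∧ ((∫ x, φ x) = 0) ∧
    ∀ x x' : Rn n, |φ x - φ x'| ≤ ‖x - x'‖ ^ α}

/-- `A_α(f)(y,t) = sup_{φ ∈ 𝒞_α} |(f * φ_t)(y)|`, where `φ_t(x) = t⁻ⁿ φ(x/t)`. -/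
def Aalpha {n : ℕ} (α : ℝ) (f : Rn n → ℝ) (y : Rn n) (t : ℝ) : ℝ :=
  ⨆ φ ∈ Calpha n α, |∫ z, (t ^ n)⁻¹ * φ (t⁻¹ • (y - z)) * f z|

/-- The intrinsic square function `S_{α,β}` of aperture `β`. -/
def Salpha {n : ℕ} (α β : ℝ) (f : Rn n → ℝ) (x : Rn n) : ℝ :=
  Real.sqrt (∫ p in {p : Rn n × ℝ | 0 < p.2 ∧ dist x p.1 < β * p.2},
    Aalpha α f p.1 p.2 ^ 2 / p.2 ^ (n + 1))

/-- The intrinsic `g^*_λ` function. -/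
def gstarAlpha {n : ℕ} (α lam : ℝ) (f : Rn n → ℝ) (x : Rn n) : ℝ :=
  Real.sqrt (∫ p in {p : Rn n × ℝ | 0 < p.2},
    (p.2 / (p.2 + dist x p.1)) ^ (lam * n) * Aalpha α f p.1 p.2 ^ 2 / p.2 ^ (n + 1))

/-- The intrinsic Littlewood–Paley `g`-function. -/
def gAlpha {n : ℕ} (α : ℝ) (f : Rn n → ℝ) (x : Rn n) : ℝ :=
  Real.sqrt (∫ t in Ioi (0 : ℝ), Aalpha α f x t ^ 2 / t)

/-- The commutator kernel
`sup_{φ ∈ 𝒞_α} |∫ (b x - b z) φ_t (y - z) f z dz|`. -/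
def commAalpha {n : ℕ} (α : ℝ) (b f : Rn n → ℝ) (x y : Rn n) (t : ℝ) : ℝ :=
  ⨆ φ ∈ Calpha n α, |∫ z, (b x - b z) * ((t ^ n)⁻¹ * φ (t⁻¹ • (y - z))) * f z|

/-- The commutator `[b, S_α]`. -/
def commS {n : ℕ} (α : ℝ) (b f : Rn n → ℝ) (x : Rn n) : ℝ :=
  Real.sqrt (∫ p in {p : Rn n × ℝ | 0 < p.2 ∧ dist x p.1 < p.2},
    commAalpha α b f x p.1 p.2 ^ 2 / p.2 ^ (n + 1))

/-- The commutator `[b, g^*_{λ,α}]`. -/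
def commGstar {n : ℕ} (α lam : ℝ) (b f : Rn n → ℝ) (x : Rn n) : ℝ :=
  Real.sqrt (∫ p in {p : Rn n × ℝ | 0 < p.2},
    (p.2 / (p.2 + dist x p.1)) ^ (lam * n) * commAalpha α b f x p.1 p.2 ^ 2 / p.2 ^ (n + 1))

/-- The commutator `[b, g_α]`. -/
def commG {n : ℕ} (α : ℝ) (b f : Rn n → ℝ) (x : Rn n) : ℝ :=
  Real.sqrt (∫ t in Ioi (0 : ℝ), commAalpha α b f x x t ^ 2 / t)

/-- `A` is an admissible constant for `f` in the generalized Morrey space `L^{p,Φ}`: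
`∫_{B(x₀,r)} |f|^p ≤ A^p Φ(r)` for all balls.  The Morrey norm `‖f‖_{L^{p,Φ}}` is the least
such `A ≥ 0`, and `f ∈ L^{p,Φ}` iff some such `A` exists. -/
def MorreyBound {n : ℕ} (p : ℝ) (Φ : ℝ → ℝ) (f : Rn n → ℝ) (A : ℝ) : Prop :=
  ∀ (x₀ : Rn n) (r : ℝ), 0 < r → (∫ x in ball x₀ r, |f x| ^ p) ≤ A ^ p * Φ r

/-- `A` is an admissible constant for `g` in the weak space `WL^{1,Φ}`:
`σ |{x ∈ B(x₀,r) : g x > σ}| ≤ A Φ(r)` for all balls and all `σ > 0`. -/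
def WeakMorreyBound {n : ℕ} (Φ : ℝ → ℝ) (g : Rn n → ℝ) (A : ℝ) : Prop :=
  ∀ (x₀ : Rn n) (r : ℝ), 0 < r → ∀ σ : ℝ, 0 < σ →
    σ * (volume {x ∈ ball x₀ r | σ < g x}).toReal ≤ A * Φ r

/-- Average of `b` over the ball `B(x₀,r)`. -/
def ballAvg {n : ℕ} (b : Rn n → ℝ) (x₀ : Rn n) (r : ℝ) : ℝ :=
  (volume (ball x₀ r)).toReal⁻¹ * ∫ y in ball x₀ r, b y

/-- `b ∈ BMO(ℝⁿ)`. -/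
def IsBMO {n : ℕ} (b : Rn n → ℝ) : Prop :=
  LocallyIntegrable b volume ∧ ∃ K : ℝ, ∀ (x₀ : Rn n) (r : ℝ), 0 < r →
    (∫ x in ball x₀ r, |b x - ballAvg b x₀ r|) ≤ K * (volume (ball x₀ r)).toReal

/-- The Hardy–Littlewood maximal function. -/
def hlMaximal {n : ℕ} (g : Rn n → ℝ) (x : Rn n) : ℝ :=
  ⨆ (x₀ : Rn n) (r : ℝ), ⨆ (_ : 0 < r ∧ x ∈ ball x₀ r),
    (volume (ball x₀ r)).toReal⁻¹ * ∫ y in ball x₀ r, |g y|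

lemma phi_bound {n : ℕ} (hn : 0 < n) {α : ℝ} (hα0 : 0 < α) (hα1 : α ≤ 1)
    {φ : Rn n → ℝ} (hφ : φ ∈ Calpha n α) (u : Rn n) : |φ u| ≤ 3 := by
  obtain ⟨hsupp, -, hhold⟩ := hφ
  rcases le_or_gt ‖u‖ 1 with hu | hu
  · set e : Rn n := EuclideanSpace.single (⟨0, hn⟩ : Fin n) (3 : ℝ) with he
    have hne : ‖e‖ = 3 := by
      rw [he, EuclideanSpace.norm_single]; norm_num
    have h1 : 1 < ‖u - e‖ := by
      have h2 : ‖e‖ - ‖u‖ ≤ ‖e - u‖ := norm_sub_norm_le e u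
      rw [norm_sub_rev] at h2
      linarith
    have h0 : φ (u - e) = 0 := hsupp _ h1
    have := hhold u (u - e)
    rw [h0, sub_zero, sub_sub_cancel, hne] at this
    calc |φ u| ≤ (3:ℝ) ^ α := this
      _ ≤ (3:ℝ) ^ (1:ℝ) := Real.rpow_le_rpow_of_exponent_le (by norm_num) hα1
      _ = 3 := Real.rpow_one 3
  · rw [hsupp u hu]; norm_num

-- support: integrand vanishes outside ball y (2t)
lemma integrand_supp {n : ℕ} {α t : ℝ} (ht : 0 < t) {φ : Rn n → ℝ}
    (hφ : φ ∈ Calpha n α) {f : Rn n → ℝ} {y : Rn n} :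
    ∀ z ∉ ball y (2 * t), (t ^ n)⁻¹ * φ (t⁻¹ • (y - z)) * f z = 0 := by
  intro z hz
  have hd : 2 * t ≤ dist y z := by
    rw [mem_ball, dist_comm] at hz; linarith [not_lt.mp hz]
  have hnorm : ‖t⁻¹ • (y - z)‖ = t⁻¹ * ‖y - z‖ := by
    rw [norm_smul, Real.norm_eq_abs, abs_of_pos (inv_pos.mpr ht)]
  have h1 : 1 < ‖t⁻¹ • (y - z)‖ := by
    rw [hnorm]
    have : ‖y - z‖ = dist y z := (dist_eq_norm y z).symm
    rw [this]
    calc (1:ℝ) = t⁻¹ * t := (inv_mul_cancel₀ ht.ne').symm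
      _ < t⁻¹ * dist y z := by
          apply mul_lt_mul_of_pos_left _ (inv_pos.mpr ht)
          linarith
  rw [hφ.1 _ h1, mul_zero, zero_mul]

lemma Aalpha_le {n : ℕ} (hn : 0 < n) {α : ℝ} (hα0 : 0 < α) (hα1 : α ≤ 1)
    {Φ : ℝ → ℝ} (hΦpos : ∀ r : ℝ, 0 < r → 0 < Φ r)
    {f : Rn n → ℝ} (hf : LocallyIntegrable f volume)
    {A : ℝ} (hA : 0 ≤ A) (hM : MorreyBound 1 Φ f A)
    (y : Rn n) {t : ℝ} (ht : 0 < t) :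
    Aalpha α f y t ≤ 3 * (t ^ n)⁻¹ * (A * Φ (2 * t)) := by
  have htn : (0:ℝ) < t ^ n := pow_pos ht n
  have hrhs : 0 ≤ 3 * (t ^ n)⁻¹ * (A * Φ (2 * t)) := by
    have := hΦpos (2*t) (by linarith)
    positivity
  apply Real.iSup_le _ hrhs
  intro φ
  apply Real.iSup_le _ hrhs
  intro hφ
  have hsupp := integrand_supp ht hφ (f := f) (y := y)
  have hfint : IntegrableOn f (ball y (2*t)) volume :=
    (hf.integrableOn_isCompact (isCompact_closedBall y (2*t))).mono_set
      ball_subset_closedBall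
  have hfint' : IntegrableOn (fun z => 3 * (t^n)⁻¹ * |f z|) (ball y (2*t)) volume := by
    exact (hfint.abs.const_mul _)
  calc |∫ z, (t ^ n)⁻¹ * φ (t⁻¹ • (y - z)) * f z|
      = |∫ z in ball y (2*t), (t ^ n)⁻¹ * φ (t⁻¹ • (y - z)) * f z| := by
        rw [setIntegral_eq_integral_of_forall_compl_eq_zero hsupp]
    _ ≤ ∫ z in ball y (2*t), |(t ^ n)⁻¹ * φ (t⁻¹ • (y - z)) * f z| :=
      by
        simpa only [Real.norm_eq_abs] using
          norm_integral_le_integral_norm (μ := volume.restrict (ball y (2*t)))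
            (fun z => (t ^ n)⁻¹ * φ (t⁻¹ • (y - z)) * f z)
    _ ≤ ∫ z in ball y (2*t), 3 * (t^n)⁻¹ * |f z| := by
        apply integral_mono_of_nonneg
        · exact Filter.Eventually.of_forall fun z => abs_nonneg _
        · exact hfint'
        · apply Filter.Eventually.of_forall
          intro z
          have hb := phi_bound hn hα0 hα1 hφ (t⁻¹ • (y - z))
          calc |(t ^ n)⁻¹ * φ (t⁻¹ • (y - z)) * f z|
              = (t^n)⁻¹ * |φ (t⁻¹ • (y - z))| * |f z| := by
                rw [abs_mul, abs_mul, abs_of_pos (inv_pos.mpr htn)]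
            _ ≤ (t^n)⁻¹ * 3 * |f z| := by
                apply mul_le_mul_of_nonneg_right _ (abs_nonneg _)
                exact mul_le_mul_of_nonneg_left hb (inv_pos.mpr htn).le
            _ = 3 * (t^n)⁻¹ * |f z| := by ring_nf
    _ = 3 * (t^n)⁻¹ * ∫ z in ball y (2*t), |f z| := by
        rw [integral_const_mul]
    _ ≤ 3 * (t^n)⁻¹ * (A * Φ (2*t)) := by
        apply mul_le_mul_of_nonneg_left _ (by positivity)
        have := hM y (2*t) (by linarith)
        simpa [Real.rpow_one] using this

lemma Aalpha_zero {n : ℕ} {α : ℝ} {f : Rn n → ℝ} {x₀ x y : Rn n} {r t : ℝ}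
    (ht : 0 < t) (hf0 : ∀ y ∈ ball x₀ (2 * r), f y = 0)
    (hx : x ∈ ball x₀ r) (hxy : dist x y < t) (htr : t ≤ r / 3) :
    Aalpha α f y t = 0 := by
  have hball : ball y (2 * t) ⊆ ball x₀ (2 * r) := by
    intro z hz
    rw [mem_ball] at *
    calc dist z x₀ ≤ dist z y + dist y x + dist x x₀ := dist_triangle4 z y x x₀
      _ < 2 * t + t + r := by
          have := mem_ball.mp hz
          rw [dist_comm] at hxy
          gcongr
      _ ≤ 2 * r := by linarith
  have hzero : ∀ φ ∈ Calpha n α, (∫ z, (t ^ n)⁻¹ * φ (t⁻¹ • (y - z)) * f z) = 0 := by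
    intro φ hφ
    have : ∀ z, (t ^ n)⁻¹ * φ (t⁻¹ • (y - z)) * f z = 0 := by
      intro z
      by_cases hz : z ∈ ball y (2 * t)
      · rw [hf0 z (hball hz), mul_zero]
      · exact integrand_supp ht hφ z hz
    simp [this]
  apply le_antisymm
  · apply Real.iSup_le _ le_rfl
    intro φ
    apply Real.iSup_le _ le_rfl
    intro hφ
    rw [hzero φ hφ]; simp
  · apply Real.iSup_nonneg
    intro φ
    apply Real.iSup_nonneg
    intro _
    exact abs_nonneg _

lemma phi_pow_doubling {Φ : ℝ → ℝ} {D : ℝ}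
    (hΦdoub : ∀ r : ℝ, 0 < r → Φ (2 * r) ≤ D * Φ r)
    (hΦpos : ∀ r : ℝ, 0 < r → 0 < Φ r) (hD1 : 1 ≤ D) :
    ∀ (k : ℕ) (s : ℝ), 0 < s → Φ (2 ^ k * s) ≤ D ^ k * Φ s := by
  intro k
  induction k with
  | zero => intro s hs; simp
  | succ k ih =>
    intro s hs
    have h1 : (2:ℝ) ^ (k+1) * s = 2 * (2 ^ k * s) := by ring
    have h2 : (0:ℝ) < 2 ^ k * s := by positivity
    calc Φ (2 ^ (k+1) * s) = Φ (2 * (2 ^ k * s)) := by rw [h1]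
      _ ≤ D * Φ (2 ^ k * s) := hΦdoub _ h2
      _ ≤ D * (D ^ k * Φ s) := by
          apply mul_le_mul_of_nonneg_left (ih s hs) (by linarith)
      _ = D ^ (k+1) * Φ s := by ring

lemma phi_growth {Φ : ℝ → ℝ} {D : ℝ}
    (hΦdoub : ∀ r : ℝ, 0 < r → Φ (2 * r) ≤ D * Φ r)
    (hΦpos : ∀ r : ℝ, 0 < r → 0 < Φ r)
    (hΦmono : ∀ r s : ℝ, 0 < r → r ≤ s → Φ r ≤ Φ s)
    (hD1 : 1 ≤ D) {s t : ℝ} (hs : 0 < s) (hst : s ≤ t) :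
    Φ t ≤ D * (t / s) ^ Real.logb 2 D * Φ s := by
  set γ := Real.logb 2 D with hγ
  have hD0 : (0:ℝ) < D := by linarith
  have hγ0 : 0 ≤ γ := Real.logb_nonneg one_lt_two hD1
  have h2γ : (2:ℝ) ^ γ = D := Real.rpow_logb two_pos (by norm_num) hD0
  have hts1 : 1 ≤ t / s := (one_le_div hs).mpr hst
  have hts0 : 0 < t / s := by linarith
  set k := ⌈Real.logb 2 (t / s)⌉₊ with hk
  have hlogb0 : 0 ≤ Real.logb 2 (t / s) := Real.logb_nonneg one_lt_two hts1
  have hle : Real.logb 2 (t / s) ≤ (k : ℝ) := Nat.le_ceil _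
  have ht2k : t / s ≤ 2 ^ k := by
    have := Real.rpow_le_rpow_of_exponent_le one_le_two hle
    rwa [Real.rpow_logb two_pos (by norm_num) hts0, Real.rpow_natCast] at this
  have hklt : (k : ℝ) < Real.logb 2 (t / s) + 1 := by
    exact_mod_cast Nat.ceil_lt_add_one hlogb0
  have h2k : (2:ℝ) ^ k ≤ 2 * (t / s) := by
    have := Real.rpow_le_rpow_of_exponent_le one_le_two hklt.le
    rwa [Real.rpow_add two_pos, Real.rpow_logb two_pos (by norm_num) hts0,
      Real.rpow_one, mul_comm, Real.rpow_natCast] at this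
  have hDk : D ^ k ≤ D * (t / s) ^ γ := by
    have : D ^ k = ((2:ℝ) ^ k) ^ γ := by
      rw [← h2γ, ← Real.rpow_natCast (2^γ) k, ← Real.rpow_mul two_pos.le,
        mul_comm, Real.rpow_mul two_pos.le, Real.rpow_natCast]
    rw [this]
    calc ((2:ℝ) ^ k) ^ γ ≤ (2 * (t / s)) ^ γ :=
          Real.rpow_le_rpow (by positivity) h2k hγ0
      _ = 2 ^ γ * (t / s) ^ γ := Real.mul_rpow two_pos.le hts0.le
      _ = D * (t / s) ^ γ := by rw [h2γ]
  calc Φ t ≤ Φ (2 ^ k * s) := by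
        apply hΦmono t _ (by linarith)
        calc t = (t / s) * s := by field_simp
          _ ≤ 2 ^ k * s := by
              apply mul_le_mul_of_nonneg_right ht2k hs.le
    _ ≤ D ^ k * Φ s := phi_pow_doubling hΦdoub hΦpos hD1 k s hs
    _ ≤ D * (t / s) ^ γ * Φ s := by
        apply mul_le_mul_of_nonneg_right hDk (hΦpos s hs).le

lemma Aalpha_nonneg {n : ℕ} {α : ℝ} {f : Rn n → ℝ} {y : Rn n} {t : ℝ} :
    0 ≤ Aalpha α f y t :=
  Real.iSup_nonneg fun _ => Real.iSup_nonneg fun _ => abs_nonneg _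

set_option maxHeartbeats 1000000 in
/-- **Inequality (2.7).** Let `0 < α ≤ 1` and let `Φ` be positive increasing and doubling
with constant `1 ≤ D < 2ⁿ`.  If `f ∈ L^{1,Φ}` vanishes on `B(x₀,2r)`, then for all
`x ∈ B(x₀,r)`, `S_α(f)(x) ≤ C ‖f‖_{L^{1,Φ}} Φ(r)/|B(x₀,r)|`. -/
theorem salpha_far_part_pointwise_L1
    (n : ℕ) (hn : 0 < n) (α D : ℝ) (hα0 : 0 < α) (hα1 : α ≤ 1)
    (Φ : ℝ → ℝ) (hΦpos : ∀ r : ℝ, 0 < r → 0 < Φ r)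
    (hΦmono : ∀ r s : ℝ, 0 < r → r ≤ s → Φ r ≤ Φ s)
    (hD1 : 1 ≤ D) (hD2 : D < 2 ^ n)
    (hΦdoub : ∀ r : ℝ, 0 < r → Φ (2 * r) ≤ D * Φ r) :
    ∃ C : ℝ, 0 < C ∧ ∀ f : Rn n → ℝ, LocallyIntegrable f volume →
      ∀ A : ℝ, 0 ≤ A → MorreyBound 1 Φ f A →
      ∀ (x₀ : Rn n) (r : ℝ), 0 < r → (∀ y ∈ ball x₀ (2 * r), f y = 0) →
      ∀ x ∈ ball x₀ r,
        Salpha α 1 f x ≤ C * A * (Φ r / (volume (ball x₀ r)).toReal) := by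
  haveI : Nonempty (Fin n) := ⟨⟨0, hn⟩⟩
  haveI : Nontrivial (Rn n) := inferInstance
  have hD0 : (0:ℝ) < D := by linarith
  set γ := Real.logb 2 D with hγdef
  have hγ0 : 0 ≤ γ := Real.logb_nonneg one_lt_two hD1
  have hγn : γ < n := by
    have h := Real.logb_lt_logb (b := 2) (by norm_num) (by linarith) hD2
    rwa [← Real.rpow_natCast 2 n, Real.logb_rpow (by norm_num) (by norm_num)] at h
  set cB := (volume (ball (0 : Rn n) 1)).toReal with hcBdef
  have hcB : 0 < cB := by
    apply ENNReal.toReal_pos (measure_ball_pos volume 0 one_pos).ne' measure_ball_lt_top.ne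
  set q : ℝ := 2*γ - 2*(n:ℝ) - 1 with hqdef
  have hq : q < -1 := by
    have : (1:ℝ) ≤ n := by exact_mod_cast hn
    simp only [hqdef]; nlinarith
  have hden : (0:ℝ) < 2*(n:ℝ) - 2*γ := by linarith
  set C₀ : ℝ := 9*D^4*3^(2*n)*cB^3 / (2*(n:ℝ) - 2*γ) with hC₀def
  have hC₀ : 0 ≤ C₀ := by positivity
  refine ⟨max 1 (Real.sqrt C₀), lt_of_lt_of_le one_pos (le_max_left _ _), ?_⟩
  set C := max 1 (Real.sqrt C₀) with hCdef
  have hC2 : C₀ ≤ C^2 := by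
    calc C₀ = Real.sqrt C₀ ^ 2 := (Real.sq_sqrt hC₀).symm
      _ ≤ C^2 := pow_le_pow_left₀ (Real.sqrt_nonneg _) (le_max_right _ _) 2
  intro f hf A hA hM x₀ r hr hf0 x hx
  have hr3 : (0:ℝ) < r/3 := by linarith
  have hvol : (volume (ball x₀ r)).toReal = r^n * cB := by
    rw [Measure.addHaar_ball volume x₀ hr.le, finrank_euclideanSpace_fin,
      ENNReal.toReal_mul, ENNReal.toReal_ofReal (by positivity)]
  -- sets and functions
  set S := {p : Rn n × ℝ | 0 < p.2 ∧ dist x p.1 < 1 * p.2} with hSdef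
  set T := {p : Rn n × ℝ | dist x p.1 < p.2 ∧ r/3 < p.2} with hTdef
  set Kc : ℝ := (3*A*D^2*Φ r)^2 * (3/r)^(2*γ) with hKcdef
  have hKc : 0 ≤ Kc := by positivity
  set c : ℝ → ℝ := fun t => Kc * t ^ (2*γ) / t ^ (3*n+1) with hcdef
  set G : Rn n × ℝ → ℝ := T.indicator (fun p => c p.2) with hGdef
  have hSmeas : MeasurableSet S := by
    have : IsOpen S := by
      rw [hSdef, Set.setOf_and]
      exact (isOpen_lt continuous_const continuous_snd).inter
        (isOpen_lt (continuous_const.dist continuous_fst) (continuous_const.mul continuous_snd))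
    exact this.measurableSet
  have hTmeas : MeasurableSet T := by
    have : IsOpen T := by
      rw [hTdef, Set.setOf_and]
      exact (isOpen_lt (continuous_const.dist continuous_fst) continuous_snd).inter
        (isOpen_lt continuous_const continuous_snd)
    exact this.measurableSet
  have hG_nonneg : ∀ p, 0 ≤ G p := by
    apply indicator_nonneg
    intro p hp
    have hpt : (0:ℝ) < p.2 := lt_trans hr3 hp.2
    have h1 : (0:ℝ) ≤ p.2 ^ (2*γ) := Real.rpow_nonneg hpt.le _
    have h2 : (0:ℝ) < p.2 ^ (3*n+1) := pow_pos hpt _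
    positivity
  -- pointwise domination
  have hFG : ∀ p ∈ S, Aalpha α f p.1 p.2 ^ 2 / p.2 ^ (n+1) ≤ G p := by
    rintro p ⟨hpt, hpd⟩
    rw [one_mul] at hpd
    rcases le_or_gt p.2 (r/3) with hca | hca
    · rw [Aalpha_zero hpt hf0 hx hpd hca]
      simp only [ne_eq, OfNat.ofNat_ne_zero, not_false_eq_true, zero_pow, zero_div]
      exact hG_nonneg p
    · have hpT : p ∈ T := ⟨hpd, hca⟩
      rw [hGdef, indicator_of_mem hpT]
      set t := p.2 with htdef
      have ht : 0 < t := hpt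
      have htn : (0:ℝ) < t^n := pow_pos ht n
      have hkey : Aalpha α f p.1 t ≤ 3*(t^n)⁻¹*(A*(D^2*((3/r)^γ * t^γ)*Φ r)) := by
        have h1 := Aalpha_le hn hα0 hα1 hΦpos hf hA hM p.1 ht
        have h2 : Φ (2*t) ≤ D * Φ t := hΦdoub t ht
        have h3 : Φ t ≤ D * (t/(r/3))^γ * Φ (r/3) :=
          phi_growth hΦdoub hΦpos hΦmono hD1 hr3 hca.le
        have h4 : Φ (r/3) ≤ Φ r := hΦmono (r/3) r hr3 (by linarith)
        have h5 : (t/(r/3) : ℝ) = (3/r) * t := by field_simp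
        have h6 : ((3/r) * t : ℝ)^γ = (3/r)^γ * t^γ :=
          Real.mul_rpow (by positivity) ht.le
        have h7 : Φ (2*t) ≤ D^2*((3/r)^γ * t^γ)*Φ r := by
          calc Φ (2*t) ≤ D * Φ t := h2
            _ ≤ D * (D * (t/(r/3))^γ * Φ (r/3)) := by
                apply mul_le_mul_of_nonneg_left h3 hD0.le
            _ = D^2 * (t/(r/3))^γ * Φ (r/3) := by ring
            _ ≤ D^2 * (t/(r/3))^γ * Φ r := by
                apply mul_le_mul_of_nonneg_left h4
                positivity
            _ = D^2*((3/r)^γ * t^γ)*Φ r := by rw [h5, h6]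
        calc Aalpha α f p.1 t ≤ 3*(t^n)⁻¹*(A*Φ (2*t)) := h1
          _ ≤ 3*(t^n)⁻¹*(A*(D^2*((3/r)^γ * t^γ)*Φ r)) := by
              apply mul_le_mul_of_nonneg_left (mul_le_mul_of_nonneg_left h7 hA)
              positivity
      calc (Aalpha α f p.1 t) ^ 2 / t ^ (n+1)
            ≤ (3*(t^n)⁻¹*(A*(D^2*((3/r)^γ * t^γ)*Φ r)))^2 / t^(n+1) := by
              gcongr
              all_goals first | exact Aalpha_nonneg | exact hkey
        _ = c t := by
              rw [hcdef]
              have e1 : ((3/r : ℝ)^γ)^2 = (3/r)^(2*γ) := by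
                rw [← Real.rpow_natCast ((3/r:ℝ)^γ) 2, ← Real.rpow_mul (by positivity)]
                norm_num [mul_comm]
              have e2 : ((t : ℝ)^γ)^2 = t^(2*γ) := by
                rw [← Real.rpow_natCast ((t:ℝ)^γ) 2, ← Real.rpow_mul ht.le]
                norm_num [mul_comm]
              have e3 : (3*(t^n)⁻¹*(A*(D^2*((3/r)^γ * t^γ)*Φ r)))^2
                  = (3*A*D^2*Φ r)^2 * (3/r)^(2*γ) * t^(2*γ) * ((t^n)^2)⁻¹ := by
                rw [← e1, ← e2]; ring
              rw [e3, hKcdef]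
              have e4 : (t^n)^2 * t^(n+1) = t^(3*n+1) := by
                rw [← pow_mul, ← pow_add]
                congr 1
                omega
              have e5 : ((t^n)^2)⁻¹ / t^(n+1) = (t^(3*n+1))⁻¹ := by
                rw [div_eq_mul_inv, ← mul_inv, e4]
              rw [mul_div_assoc, e5, ← div_eq_mul_inv]
  -- slices of G
  have hslice : ∀ t : ℝ, r/3 < t → (fun y : Rn n => G (y, t)) = (ball x t).indicator (fun _ => c t) := by
    intro t ht
    funext y
    by_cases hy : dist x y < t
    · rw [hGdef, indicator_of_mem (show ((y,t) : Rn n × ℝ) ∈ T from ⟨hy, ht⟩),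
        indicator_of_mem (mem_ball'.mpr hy)]
    · rw [hGdef, indicator_of_notMem (fun hc => hy hc.1),
        indicator_of_notMem (fun hc => hy (mem_ball'.mp hc))]
  have hslice0 : ∀ t : ℝ, ¬ (r/3 < t) → (fun y : Rn n => G (y, t)) = 0 := by
    intro t ht
    funext y
    rw [hGdef, indicator_of_notMem (fun hc => ht hc.2)]
    rfl
  have hc_eq : ∀ t : ℝ, r/3 < t → c t * (t^n * cB) = Kc * cB * t ^ q := by
    intro t ht
    have ht0 : (0:ℝ) < t := lt_trans hr3 ht
    have e1 : (t:ℝ) ^ q = t ^ (2*γ) / t ^ ((2*(n:ℝ)+1)) := by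
      rw [← Real.rpow_sub ht0]
      congr 1
      rw [hqdef]; ring
    have e2 : (t:ℝ) ^ ((2*(n:ℝ)+1)) = t ^ (2*n+1 : ℕ) := by
      rw [← Real.rpow_natCast t (2*n+1)]
      congr 1
      push_cast; ring
    have e3 : (t:ℝ) ^ (3*n+1 : ℕ) = t ^ (2*n+1 : ℕ) * t ^ n := by
      rw [← pow_add]; congr 1; omega
    rw [hcdef, e1, e2]
    simp only []
    rw [e3]
    have h1 : (t:ℝ) ^ (2*n+1 : ℕ) ≠ 0 := (pow_pos ht0 _).ne'
    have h2 : (t:ℝ) ^ n ≠ 0 := (pow_pos ht0 _).ne'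
    field_simp
  have hvball : ∀ t : ℝ, 0 < t → (volume (ball x t)).toReal = t^n * cB := by
    intro t ht0
    rw [Measure.addHaar_ball volume x ht0.le, finrank_euclideanSpace_fin,
      ENNReal.toReal_mul, ENNReal.toReal_ofReal (by positivity)]
  have hIy : ∀ t : ℝ, (∫ y, G (y, t)) = (Ioi (r/3)).indicator (fun t => Kc * cB * t ^ q) t := by
    intro t
    by_cases ht : r/3 < t
    · have ht0 : (0:ℝ) < t := lt_trans hr3 ht
      rw [hslice t ht, indicator_of_mem (mem_Ioi.mpr ht)]
      rw [integral_indicator_const _ measurableSet_ball]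
      rw [smul_eq_mul, measureReal_def, hvball t ht0, mul_comm]
      exact hc_eq t ht
    · rw [hslice0 t ht, indicator_of_notMem (fun hc => ht (mem_Ioi.mp hc))]
      simp
  have hGmeas : AEStronglyMeasurable G (volume : Measure (Rn n × ℝ)) := by
    apply Measurable.aestronglyMeasurable
    have hm : Measurable fun p : Rn n × ℝ => Kc * p.2 ^ (2*γ) / p.2 ^ (3*n+1) := by
      fun_prop
    exact hm.indicator hTmeas
  have hIndInt : Integrable ((Ioi (r/3)).indicator (fun t => Kc * cB * t ^ q)) volume := by
    rw [integrable_indicator_iff measurableSet_Ioi]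
    exact ((integrableOn_Ioi_rpow_of_lt hq hr3).const_mul (Kc * cB))
  have hGint : Integrable G (volume : Measure (Rn n × ℝ)) := by
    rw [Measure.volume_eq_prod] at hGmeas ⊢
    rw [integrable_prod_iff' hGmeas]
    constructor
    · apply Filter.Eventually.of_forall
      intro t
      by_cases ht : r/3 < t
      · rw [hslice t ht]
        rw [integrable_indicator_iff measurableSet_ball]
        exact integrableOn_const measure_ball_lt_top.ne
      · rw [hslice0 t ht]
        exact integrable_zero _ _ _
    · have : (fun t : ℝ => ∫ y, ‖G (y, t)‖) = (Ioi (r/3)).indicator (fun t => Kc * cB * t ^ q) := by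
        funext t
        rw [← hIy t]
        congr 1
        funext y
        exact Real.norm_of_nonneg (hG_nonneg _)
      rw [this]
      exact hIndInt
  have hGval : (∫ p, G p) = Kc * cB * (-(r/3) ^ (q+1) / (q+1)) := by
    rw [Measure.volume_eq_prod] at hGint ⊢
    rw [integral_prod_symm G hGint]
    have : (fun t : ℝ => ∫ y, G (y, t)) = (Ioi (r/3)).indicator (fun t => Kc * cB * t ^ q) := by
      funext t; exact hIy t
    rw [this, integral_indicator measurableSet_Ioi, integral_const_mul,
      integral_Ioi_rpow_of_lt hq hr3]
  -- algebraic evaluation of the total integral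
  have hq1lt : q + 1 < 0 := by linarith
  have e0 : -(r/3:ℝ)^(q+1)/(q+1) = (r/3)^(q+1)/(2*(n:ℝ)-2*γ) := by
    rw [div_eq_div_iff hq1lt.ne hden.ne']
    rw [hqdef]; ring
  have eA : (r/3:ℝ)^(q+1) = (r/3)^(2*γ) / (r/3)^(2*(n:ℝ)) := by
    rw [← Real.rpow_sub hr3]
    congr 1
    rw [hqdef]; ring
  have eB : (r/3:ℝ)^(2*(n:ℝ)) = (r/3)^(2*n:ℕ) := by
    rw [← Real.rpow_natCast _ (2*n)]
    congr 1
    push_cast; ring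
  have eC : ((r/3:ℝ))^(2*n:ℕ) = r^(2*n)/3^(2*n) := div_pow r 3 (2*n)
  have hPQ : (3/r:ℝ)^(2*γ) * (r/3)^(2*γ) = 1 := by
    rw [← Real.mul_rpow (by positivity) (by positivity),
      show (3/r:ℝ)*(r/3) = 1 by field_simp]
    exact Real.one_rpow _
  have hr2n : (0:ℝ) < r^(2*n) := pow_pos hr _
  have h3n : (0:ℝ) < (3:ℝ)^(2*n) := by positivity
  have eL : Kc * cB * ((r/3:ℝ)^(q+1)/(2*(n:ℝ)-2*γ))
      = (3*A*D^2*Φ r)^2*cB*3^(2*n)/(r^(2*n)*(2*(n:ℝ)-2*γ)) := by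
    rw [hKcdef, eA, eB, eC]
    have : (3*A*D^2*Φ r)^2 * (3/r)^(2*γ) * cB * ((r/3:ℝ)^(2*γ) / (r^(2*n)/3^(2*n)) / (2*(n:ℝ)-2*γ))
        = (3*A*D^2*Φ r)^2 * ((3/r)^(2*γ) * (r/3:ℝ)^(2*γ)) * cB * (3^(2*n) / (r^(2*n)*(2*(n:ℝ)-2*γ))) := by
      field_simp
    rw [this, hPQ]
    field_simp
  have eR : (C*A*(Φ r/(r^n*cB)))^2 = (C^2/cB^2)*(A^2*(Φ r)^2/r^(2*n)) := by
    rw [show (r:ℝ)^(2*n) = (r^n)^2 by rw [← pow_mul]; congr 1; omega]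
    field_simp
  have hfinal : (3*A*D^2*Φ r)^2*cB*3^(2*n)/(r^(2*n)*(2*(n:ℝ)-2*γ))
      ≤ (C*A*(Φ r/(r^n*cB)))^2 := by
    rw [eR]
    have eL2 : (3*A*D^2*Φ r)^2*cB*3^(2*n)/(r^(2*n)*(2*(n:ℝ)-2*γ))
        = (9*D^4*3^(2*n)*cB/(2*(n:ℝ)-2*γ)) * (A^2*(Φ r)^2/r^(2*n)) := by
      field_simp
      ring
    rw [eL2]
    apply mul_le_mul_of_nonneg_right _ (by positivity)
    rw [div_le_div_iff₀ hden (pow_pos hcB 2)]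
    have h1 : 9*D^4*3^(2*n)*cB^3 ≤ C^2 * (2*(n:ℝ)-2*γ) := by
      have := (div_le_iff₀ hden).mp hC2
      linarith
    calc 9*D^4*3^(2*n)*cB*cB^2 = 9*D^4*3^(2*n)*cB^3 := by ring
      _ ≤ C^2*(2*(n:ℝ)-2*γ) := h1
  -- final chain
  have hSnonneg : ∀ p ∈ S, 0 ≤ Aalpha α f p.1 p.2 ^ 2 / p.2 ^ (n+1) := by
    intro p hp
    exact div_nonneg (sq_nonneg _) (pow_pos hp.1 (n+1)).le
  have hchain : (∫ p in S, Aalpha α f p.1 p.2 ^ 2 / p.2 ^ (n+1))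
      ≤ (C*A*(Φ r/(r^n*cB)))^2 := by
    calc (∫ p in S, Aalpha α f p.1 p.2 ^ 2 / p.2 ^ (n+1))
        ≤ ∫ p in S, G p := by
          apply integral_mono_of_nonneg
          · exact ae_restrict_of_forall_mem hSmeas hSnonneg
          · exact hGint.restrict
          · exact ae_restrict_of_forall_mem hSmeas hFG
      _ ≤ ∫ p, G p := setIntegral_le_integral hGint
            (Filter.Eventually.of_forall hG_nonneg)
      _ = Kc * cB * (-(r/3) ^ (q+1) / (q+1)) := hGval
      _ = Kc * cB * ((r/3:ℝ)^(q+1)/(2*(n:ℝ)-2*γ)) := by rw [e0]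
      _ = (3*A*D^2*Φ r)^2*cB*3^(2*n)/(r^(2*n)*(2*(n:ℝ)-2*γ)) := eL
      _ ≤ (C*A*(Φ r/(r^n*cB)))^2 := hfinal
  have hRHS0 : 0 ≤ C*A*(Φ r/(r^n*cB)) := by
    have hΦr := hΦpos r hr
    have hC0 : (0:ℝ) < C := lt_of_lt_of_le one_pos (le_max_left _ _)
    exact mul_nonneg (mul_nonneg hC0.le hA) (div_nonneg hΦr.le (by positivity))
  rw [hvol]
  unfold Salpha
  rw [← hSdef]
  calc Real.sqrt (∫ p in S, Aalpha α f p.1 p.2 ^ 2 / p.2 ^ (n+1))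
      ≤ Real.sqrt ((C*A*(Φ r/(r^n*cB)))^2) := Real.sqrt_le_sqrt hchain
    _ = C*A*(Φ r/(r^n*cB)) := Real.sqrt_sq hRHS0
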